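/- Let (E, F) be a resistance form on a set X whose resistance metric R is complete and such that (X,R) is doubling. Then for every u ∈ F, the truncations û_n := max(min(u, n), −n) belong to F for every n ∈ ℕ, and lim_{n→∞} E(u − û_n, u − û_n) = 0. -/

import Mathlib

open Filter Set Metric
open scoped ENNReal Topology

/-- A resistance form `(E, F)` on a set `X` (Kigami):
`F` is a linear subspace of the real-valued functions on `X`, `E` is a nonnegative
symmetric bilinear form on `F` such that (RF1) constants belong to `F` and
`E(u,u) = 0` iff `u` is constant, (RF2) the quotient of `F` by the constants is a
Hilbert space under `E` (stated as completeness of the `E`-seminorm on `F`),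
(RF3) points of `X` are separated by `F`, (RF4) for `x ≠ y` the quantity
`R(x,y) = (inf {E(u,u) : u ∈ F, u x = 1, u y = 0})⁻¹` is finite (i.e. the infimum
is positive; an admissible `u` always exists), and (RF5) the Markov property holds
for the unit truncation. -/
structure ResistanceForm (X : Type*) where
  F : Set (X → ℝ)
  E : (X → ℝ) → (X → ℝ) → ℝ
  zero_mem : (0 : X → ℝ) ∈ F
  add_mem : ∀ {u v : X → ℝ}, u ∈ F → v ∈ F → u + v ∈ F
  smul_mem : ∀ (c : ℝ) {u : X → ℝ}, u ∈ F → c • u ∈ F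
  const_mem : ∀ c : ℝ, (fun _ => c) ∈ F
  symm : ∀ u ∈ F, ∀ v ∈ F, E u v = E v u
  add_left : ∀ u ∈ F, ∀ v ∈ F, ∀ w ∈ F, E (u + v) w = E u w + E v w
  smul_left : ∀ (c : ℝ), ∀ u ∈ F, ∀ v ∈ F, E (c • u) v = c * E u v
  nonneg : ∀ u ∈ F, 0 ≤ E u u
  null_iff_const : ∀ u ∈ F, (E u u = 0 ↔ ∃ c : ℝ, ∀ x, u x = c)
  complete : ∀ u : ℕ → (X → ℝ), (∀ n, u n ∈ F) →
    (∀ ε : ℝ, 0 < ε → ∃ N : ℕ, ∀ m ≥ N, ∀ n ≥ N, E (u m - u n) (u m - u n) < ε) →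
    ∃ v ∈ F, ∀ ε : ℝ, 0 < ε → ∃ N : ℕ, ∀ n ≥ N, E (v - u n) (v - u n) < ε
  sep : ∀ x y : X, x ≠ y → ∃ u ∈ F, u x ≠ u y
  exists_unit : ∀ x y : X, x ≠ y → ∃ u ∈ F, u x = 1 ∧ u y = 0
  inf_pos : ∀ x y : X, x ≠ y →
    0 < sInf {e : ℝ | ∃ u ∈ F, u x = 1 ∧ u y = 0 ∧ E u u = e}
  markov : ∀ u ∈ F, (fun x => max 0 (min 1 (u x))) ∈ F ∧
    E (fun x => max 0 (min 1 (u x))) (fun x => max 0 (min 1 (u x))) ≤ E u u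

namespace ResistanceForm

variable {X : Type*}

open Classical in
/-- The resistance metric `R` associated with a resistance form:
`R(x,x) = 0` and `R(x,y) = (inf {E(u,u) : u ∈ F, u x = 1, u y = 0})⁻¹` for `x ≠ y`. -/
noncomputable def rmetric (rf : ResistanceForm X) (x y : X) : ℝ :=
  if x = y then 0
  else (sInf {e : ℝ | ∃ u ∈ rf.F, u x = 1 ∧ u y = 0 ∧ rf.E u u = e})⁻¹

open Classical in
/-- The resistance `𝓡(A,B)` between two sets: the reciprocal of the minimal energy of
functions that are `≡ 1` on `A` and `≡ 0` on `B` if such functions exist, `0` if no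
such function exists, and `∞` if `A` or `B` is empty. -/
noncomputable def setRes (rf : ResistanceForm X) (A B : Set X) : ℝ≥0∞ :=
  if A.Nonempty ∧ B.Nonempty then
    (if ∃ u ∈ rf.F, (∀ x ∈ A, u x = 1) ∧ (∀ x ∈ B, u x = 0) then
      (ENNReal.ofReal
        (sInf {e : ℝ | ∃ u ∈ rf.F, (∀ x ∈ A, u x = 1) ∧ (∀ x ∈ B, u x = 0) ∧ rf.E u u = e}))⁻¹
    else 0)
  else ⊤

end ResistanceForm

/-- A distance function `ρ` on `X` is doubling: there is `N ∈ ℕ` such that every ball of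
radius `2r` is covered by `N` balls of radius `r`. -/
def DoublingOf {X : Type*} (ρ : X → X → ℝ) : Prop :=
  ∃ N : ℕ, ∀ (x : X) (r : ℝ), ∃ s : Finset X, s.card ≤ N ∧
    {y : X | ρ x y < 2 * r} ⊆ ⋃ z ∈ s, {y : X | ρ z y < r}

/-- A distance function `ρ` on `X` is uniformly perfect: there is `γ > 1` such that
`B(x, γ r) \ B(x, r) ≠ ∅` whenever `B(x,r)` is not the whole space. -/
def UniformlyPerfectOf {X : Type*} (ρ : X → X → ℝ) : Prop :=
  ∃ γ : ℝ, 1 < γ ∧ ∀ (x : X) (r : ℝ), 0 < r → {y : X | ρ x y < r} ≠ Set.univ →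
    ({y : X | ρ x y < γ * r} \ {y : X | ρ x y < r}).Nonempty

namespace ResistanceForm

variable {X : Type*} (rf : ResistanceForm X)

lemma neg_mem' {u : X → ℝ} (hu : u ∈ rf.F) : -u ∈ rf.F := by
  have := rf.smul_mem (-1) hu
  simpa using this

lemma sub_mem' {u v : X → ℝ} (hu : u ∈ rf.F) (hv : v ∈ rf.F) : u - v ∈ rf.F := by
  rw [sub_eq_add_neg]; exact rf.add_mem hu (rf.neg_mem' hv)

lemma E_add_right {u v w : X → ℝ} (hu : u ∈ rf.F) (hv : v ∈ rf.F) (hw : w ∈ rf.F) :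
    rf.E u (v + w) = rf.E u v + rf.E u w := by
  rw [rf.symm u hu (v + w) (rf.add_mem hv hw), rf.add_left v hv w hw u hu,
    rf.symm v hv u hu, rf.symm w hw u hu]

lemma E_smul_right (c : ℝ) {u v : X → ℝ} (hu : u ∈ rf.F) (hv : v ∈ rf.F) :
    rf.E u (c • v) = c * rf.E u v := by
  rw [rf.symm u hu (c • v) (rf.smul_mem c hv), rf.smul_left c v hv u hu, rf.symm v hv u hu]

lemma E_smul_smul (c : ℝ) {u : X → ℝ} (hu : u ∈ rf.F) :
    rf.E (c • u) (c • u) = c ^ 2 * rf.E u u := by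
  rw [rf.smul_left c u hu (c • u) (rf.smul_mem c hu), rf.E_smul_right c hu hu]; ring

lemma E_add_expand {g d : X → ℝ} (hg : g ∈ rf.F) (hd : d ∈ rf.F) :
    rf.E (g + d) (g + d) = rf.E g g + 2 * rf.E g d + rf.E d d := by
  rw [rf.add_left g hg d hd (g + d) (rf.add_mem hg hd), rf.E_add_right hg hg hd,
    rf.E_add_right hd hg hd, rf.symm d hd g hg]
  ring

lemma E_const_right {w : X → ℝ} (hw : w ∈ rf.F) (c : ℝ) :
    rf.E w (fun _ => c) = 0 := by
  set b := rf.E w (fun _ => c) with hb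
  have hcF : (fun _ : X => c) ∈ rf.F := rf.const_mem c
  have hcc : rf.E (fun _ : X => c) (fun _ : X => c) = 0 :=
    (rf.null_iff_const _ hcF).mpr ⟨c, fun _ => rfl⟩
  by_contra hb0
  have key : ∀ t : ℝ, 0 ≤ rf.E w w + 2 * t * b := by
    intro t
    have h1 : 0 ≤ rf.E (w + t • fun _ : X => c) (w + t • fun _ : X => c) :=
      rf.nonneg _ (rf.add_mem hw (rf.smul_mem t hcF))
    have h2 : rf.E (w + t • fun _ : X => c) (w + t • fun _ : X => c)
        = rf.E w w + 2 * (t * b) + t ^ 2 * 0 := by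
      rw [rf.E_add_expand hw (rf.smul_mem t hcF), rf.E_smul_right t hw hcF,
        rf.smul_left t _ hcF _ (rf.smul_mem t hcF), rf.E_smul_right t hcF hcF, hcc, ← hb]
      ring
    rw [h2] at h1; linarith
  have := key (-(rf.E w w + 1) / (2 * b))
  have h3 : 2 * (-(rf.E w w + 1) / (2 * b)) * b = -(rf.E w w + 1) := by
    field_simp
  linarith [this, h3.symm ▸ this]

lemma E_shift {w : X → ℝ} (hw : w ∈ rf.F) (c : ℝ) :
    rf.E (w + fun _ => c) (w + fun _ => c) = rf.E w w := by
  have hcF : (fun _ : X => c) ∈ rf.F := rf.const_mem c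
  have hcc : rf.E (fun _ : X => c) (fun _ : X => c) = 0 :=
    (rf.null_iff_const _ hcF).mpr ⟨c, fun _ => rfl⟩
  rw [rf.E_add_expand hw hcF, rf.E_const_right hw c, hcc]; ring

end ResistanceForm
namespace ResistanceForm

variable {X : Type*} (rf : ResistanceForm X)

lemma trunc_eq_scalar (a n : ℝ) (hn : 0 < n) :
    max (min a n) (-n) = 2 * n * max 0 (min 1 ((a + n) / (2 * n))) - n := by
  have h2n : (0:ℝ) < 2 * n := by linarith
  rcases le_total a (-n) with h | h
  · rw [min_eq_left (by linarith), max_eq_right h]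
    have hz : (a + n) / (2 * n) ≤ 0 := div_nonpos_of_nonpos_of_nonneg (by linarith) (by linarith)
    rw [min_eq_right (by linarith), max_eq_left hz]
    ring
  · rcases le_total a n with h' | h'
    · rw [min_eq_left h', max_eq_left h]
      have h0 : 0 ≤ (a + n) / (2 * n) := div_nonneg (by linarith) (by linarith)
      have h1 : (a + n) / (2 * n) ≤ 1 := by
        rw [div_le_one h2n]; linarith
      rw [min_eq_right h1, max_eq_right h0]
      field_simp
      ring
    · rw [min_eq_right h', max_eq_left (by linarith)]
      have h1 : (1:ℝ) ≤ (a + n) / (2 * n) := by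
        rw [le_div_iff₀ h2n]; linarith
      rw [min_eq_left h1, max_eq_right zero_le_one]
      ring

lemma trunc_fix_scalar (a c n t : ℝ) (hn : 0 ≤ n) (ht0 : 0 ≤ t) (ht1 : t ≤ 1)
    (h1 : -n ≤ a → a ≤ n → c = a) (h2 : n < a → n ≤ c) (h3 : a < -n → c ≤ -n) :
    max (min (max (min a n) (-n) + t * (c - max (min a n) (-n))) n) (-n)
      = max (min a n) (-n) := by
  rcases lt_or_ge n a with ha | ha
  · have hb : max (min a n) (-n) = n := by
      rw [min_eq_right ha.le, max_eq_left (by linarith)]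
    rw [hb]
    have hc := h2 ha
    have hin : n ≤ n + t * (c - n) := by nlinarith
    rw [min_eq_right hin, max_eq_left (by linarith)]
  · rcases lt_or_ge a (-n) with ha' | ha'
    · have hb : max (min a n) (-n) = -n := by
        rw [min_eq_left ha, max_eq_right ha'.le]
      rw [hb]
      have hc := h3 ha'
      have hin : -n + t * (c - -n) ≤ -n := by nlinarith
      rw [min_eq_left (by linarith), max_eq_right hin]
    · have hb : max (min a n) (-n) = a := by
        rw [min_eq_left ha, max_eq_left ha']
      rw [hb, h1 ha' ha]
      simp only [sub_self, mul_zero, add_zero]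
      rw [min_eq_left ha, max_eq_left ha']

lemma trunc_mem_le {h : X → ℝ} (hh : h ∈ rf.F) (n : ℕ) :
    (fun x => max (min (h x) (n : ℝ)) (-(n : ℝ))) ∈ rf.F ∧
      rf.E (fun x => max (min (h x) (n : ℝ)) (-(n : ℝ)))
        (fun x => max (min (h x) (n : ℝ)) (-(n : ℝ))) ≤ rf.E h h := by
  rcases Nat.eq_zero_or_pos n with rfl | hn
  · have he : (fun x => max (min (h x) ((0:ℕ) : ℝ)) (-((0:ℕ) : ℝ))) = fun _ : X => (0:ℝ) := by
      funext x
      simp only [Nat.cast_zero, neg_zero]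
      rw [max_eq_right (min_le_right _ _)]
    rw [he]
    refine ⟨rf.const_mem 0, ?_⟩
    rw [(rf.null_iff_const _ (rf.const_mem 0)).mpr ⟨0, fun _ => rfl⟩]
    exact rf.nonneg h hh
  · set N : ℝ := (n : ℝ) with hNdef
    have hN : 0 < N := by rw [hNdef]; exact_mod_cast hn
    have h2N : (0:ℝ) < 2 * N := by linarith
    set w : X → ℝ := (1 / (2 * N)) • (h + fun _ => N) with hw
    have hwF : w ∈ rf.F := rf.smul_mem _ (rf.add_mem hh (rf.const_mem N))
    obtain ⟨hΘF, hΘE⟩ := rf.markov w hwF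
    set Θ : X → ℝ := fun x => max 0 (min 1 (w x)) with hΘ
    have hwx : ∀ x, w x = (h x + N) / (2 * N) := by
      intro x
      simp only [hw, Pi.smul_apply, Pi.add_apply, smul_eq_mul]
      ring
    have heq : (fun x => max (min (h x) N) (-N)) = (2 * N) • Θ + fun _ => -N := by
      funext x
      simp only [Pi.add_apply, Pi.smul_apply, smul_eq_mul, hΘ, hwx x]
      rw [trunc_eq_scalar (h x) N hN]
      ring
    constructor
    · rw [heq]
      exact rf.add_mem (rf.smul_mem _ hΘF) (rf.const_mem (-N))
    · rw [heq, rf.E_shift (rf.smul_mem _ hΘF) (-N), rf.E_smul_smul _ hΘF]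
      have hEw : rf.E w w = (1 / (2 * N)) ^ 2 * rf.E h h := by
        rw [hw, rf.E_smul_smul _ (rf.add_mem hh (rf.const_mem N)), rf.E_shift hh N]
      have : (2 * N) ^ 2 * rf.E Θ Θ ≤ (2 * N) ^ 2 * rf.E w w :=
        mul_le_mul_of_nonneg_left hΘE (by positivity)
      rw [hEw] at this
      calc (2 * N) ^ 2 * rf.E Θ Θ ≤ (2 * N) ^ 2 * ((1 / (2 * N)) ^ 2 * rf.E h h) := this
        _ = rf.E h h := by field_simp

end ResistanceForm
namespace ResistanceForm

variable {X : Type*} (rf : ResistanceForm X)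

lemma fix_nonneg {g d : X → ℝ} (hg : g ∈ rf.F) (hd : d ∈ rf.F) (n : ℕ)
    (hfix : ∀ t : ℝ, 0 ≤ t → t ≤ 1 →
      ∀ x, max (min (g x + t * d x) (n : ℝ)) (-(n : ℝ)) = g x) :
    0 ≤ rf.E g d := by
  have key : ∀ t : ℝ, 0 < t → t ≤ 1 → 0 ≤ 2 * t * rf.E g d + t ^ 2 * rf.E d d := by
    intro t ht0 ht1
    have htd : t • d ∈ rf.F := rf.smul_mem t hd
    have hgt : g + t • d ∈ rf.F := rf.add_mem hg htd
    have hTg : (fun x => max (min ((g + t • d) x) (n : ℝ)) (-(n : ℝ))) = g := by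
      funext x
      simp only [Pi.add_apply, Pi.smul_apply, smul_eq_mul]
      exact hfix t ht0.le ht1 x
    have hle := (rf.trunc_mem_le hgt n).2
    rw [hTg] at hle
    have hexp : rf.E (g + t • d) (g + t • d)
        = rf.E g g + 2 * t * rf.E g d + t ^ 2 * rf.E d d := by
      rw [rf.E_add_expand hg htd, rf.E_smul_right t hg hd, rf.E_smul_smul t hd]; ring
    rw [hexp] at hle
    linarith
  by_contra hb
  push_neg at hb
  set b := rf.E g d with hbdef
  set c := rf.E d d with hcdef
  have hc : 0 ≤ c := rf.nonneg d hd
  set t := min 1 ((-b) / (c + 1)) with htdef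
  have ht0 : 0 < t := lt_min one_pos (div_pos (by linarith) (by linarith))
  have ht1 : t ≤ 1 := min_le_left _ _
  have hk := key t ht0 ht1
  have htb : t ≤ (-b) / (c + 1) := min_le_right _ _
  have htc : t * c ≤ -b := by
    have h1 : t * c ≤ ((-b) / (c + 1)) * c := mul_le_mul_of_nonneg_right htb hc
    have h2 : ((-b) / (c + 1)) * c ≤ -b := by
      rw [div_mul_eq_mul_div, div_le_iff₀ (by linarith)]
      nlinarith
    linarith
  nlinarith

lemma sub_sq_le {w : X → ℝ} (hw : w ∈ rf.F) (x y : X) (hxy : x ≠ y) :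
    (w x - w y) ^ 2 * sInf {e : ℝ | ∃ p ∈ rf.F, p x = 1 ∧ p y = 0 ∧ rf.E p p = e}
      ≤ rf.E w w := by
  set s := sInf {e : ℝ | ∃ p ∈ rf.F, p x = 1 ∧ p y = 0 ∧ rf.E p p = e} with hs
  have hspos : 0 < s := rf.inf_pos x y hxy
  by_cases hd : w x = w y
  · rw [hd, sub_self]
    simpa using rf.nonneg w hw
  · set D := w x - w y with hD
    have hDne : D ≠ 0 := sub_ne_zero_of_ne hd
    set p : X → ℝ := (1 / D) • (w + fun _ => -(w y)) with hp
    have hpF : p ∈ rf.F := rf.smul_mem _ (rf.add_mem hw (rf.const_mem _))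
    have hpx : p x = 1 := by
      simp only [hp, Pi.smul_apply, Pi.add_apply, smul_eq_mul]
      rw [show w x + -w y = D from by rw [hD]; ring]
      field_simp
    have hpy : p y = 0 := by
      simp only [hp, Pi.smul_apply, Pi.add_apply, smul_eq_mul]
      ring
    have hEp : rf.E p p = (1 / D) ^ 2 * rf.E w w := by
      rw [hp, rf.E_smul_smul _ (rf.add_mem hw (rf.const_mem _)), rf.E_shift hw]
    have hbdd : BddBelow {e : ℝ | ∃ p ∈ rf.F, p x = 1 ∧ p y = 0 ∧ rf.E p p = e} := by
      refine ⟨0, fun e he => ?_⟩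
      obtain ⟨q, hq, -, -, rfl⟩ := he
      exact rf.nonneg q hq
    have hmem : rf.E p p ∈ {e : ℝ | ∃ p ∈ rf.F, p x = 1 ∧ p y = 0 ∧ rf.E p p = e} :=
      ⟨p, hpF, hpx, hpy, rfl⟩
    have hle : s ≤ rf.E p p := csInf_le hbdd hmem
    rw [hEp] at hle
    have hD2 : 0 < D ^ 2 := by positivity
    calc D ^ 2 * s ≤ D ^ 2 * ((1 / D) ^ 2 * rf.E w w) := by nlinarith
      _ = rf.E w w := by field_simp

end ResistanceForm
/-- Suppose the resistance metric `R` is complete and doubling.  For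
`u ∈ F`, the truncations `û_n = max (min u n) (−n)` belong to `F` and
`E(u − û_n, u − û_n) → 0`. -/
theorem truncation_energy_tendsto {X : Type*} [MetricSpace X] [CompleteSpace X]
    (rf : ResistanceForm X) (hR : ∀ x y : X, dist x y = rf.rmetric x y)
    (hdb : DoublingOf fun x y : X => dist x y)
    (u : X → ℝ) (hu : u ∈ rf.F) :
    (∀ n : ℕ, (fun x => max (min (u x) (n : ℝ)) (-(n : ℝ))) ∈ rf.F) ∧
    Tendsto (fun n : ℕ =>
        rf.E (u - fun x => max (min (u x) (n : ℝ)) (-(n : ℝ)))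
          (u - fun x => max (min (u x) (n : ℝ)) (-(n : ℝ))))
      atTop (𝓝 0) := by
  classical
  set Tu : ℕ → X → ℝ := fun n x => max (min (u x) (n : ℝ)) (-(n : ℝ)) with hTudef
  have hTuF : ∀ n, Tu n ∈ rf.F := fun n => (rf.trunc_mem_le hu n).1
  refine ⟨hTuF, ?_⟩
  show Tendsto (fun n : ℕ => rf.E (u - Tu n) (u - Tu n)) atTop (𝓝 0)
  -- cross terms nonnegative
  have hcross1 : ∀ n : ℕ, 0 ≤ rf.E (Tu n) (u - Tu n) := by
    intro n
    apply rf.fix_nonneg (hTuF n) (rf.sub_mem' hu (hTuF n)) n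
    intro t ht0 ht1 x
    have := ResistanceForm.trunc_fix_scalar (u x) (u x) (n : ℝ) t (Nat.cast_nonneg n) ht0 ht1
      (fun _ _ => rfl) (fun h => le_of_lt h) (fun h => le_of_lt h)
    simpa [hTudef, Pi.sub_apply] using this
  have hcross2 : ∀ m n : ℕ, n ≤ m → 0 ≤ rf.E (Tu n) (Tu m - Tu n) := by
    intro m n hnm
    apply rf.fix_nonneg (hTuF n) (rf.sub_mem' (hTuF m) (hTuF n)) n
    intro t ht0 ht1 x
    have hmn : (n : ℝ) ≤ (m : ℝ) := Nat.cast_le.mpr hnm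
    have h1 : -(n : ℝ) ≤ u x → u x ≤ (n : ℝ) → Tu m x = u x := by
      intro ha hb
      simp only [hTudef]
      rw [min_eq_left (le_trans hb hmn), max_eq_left (le_trans (neg_le_neg hmn) ha)]
    have h2 : (n : ℝ) < u x → (n : ℝ) ≤ Tu m x := by
      intro ha
      exact le_trans (le_min ha.le hmn) (le_max_left _ _)
    have h3 : u x < -(n : ℝ) → Tu m x ≤ -(n : ℝ) := by
      intro ha
      exact max_le (le_trans (min_le_left _ _) ha.le) (neg_le_neg hmn)
    have := ResistanceForm.trunc_fix_scalar (u x) (Tu m x) (n : ℝ) t (Nat.cast_nonneg n)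
      ht0 ht1 h1 h2 h3
    simpa [hTudef, Pi.sub_apply] using this
  set a : ℕ → ℝ := fun n => rf.E (Tu n) (Tu n) with ha
  have hkey : ∀ m n : ℕ, n ≤ m → a n + rf.E (Tu m - Tu n) (Tu m - Tu n) ≤ a m := by
    intro m n hnm
    have hd : Tu m - Tu n ∈ rf.F := rf.sub_mem' (hTuF m) (hTuF n)
    have hexp := rf.E_add_expand (hTuF n) hd
    rw [show Tu n + (Tu m - Tu n) = Tu m from by abel] at hexp
    have h2 := hcross2 m n hnm
    simp only [ha] at *
    linarith
  have hmono : Monotone a := by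
    intro n m hnm
    have h1 := hkey m n hnm
    have h2 := rf.nonneg _ (rf.sub_mem' (hTuF m) (hTuF n))
    linarith
  have hbdd : ∀ n, a n ≤ rf.E u u := by
    intro n
    have hd : u - Tu n ∈ rf.F := rf.sub_mem' hu (hTuF n)
    have hexp := rf.E_add_expand (hTuF n) hd
    rw [show Tu n + (u - Tu n) = u from by abel] at hexp
    have h1 := hcross1 n
    have h2 := rf.nonneg _ hd
    simp only [ha]
    linarith
  have hL : Tendsto a atTop (𝓝 (⨆ n, a n)) :=
    tendsto_atTop_ciSup hmono ⟨rf.E u u, by rintro x ⟨n, rfl⟩; exact hbdd n⟩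
  have hcauchy := hL.cauchySeq
  rw [Metric.cauchySeq_iff] at hcauchy
  have hCau : ∀ ε : ℝ, 0 < ε → ∃ N : ℕ, ∀ m ≥ N, ∀ n ≥ N,
      rf.E (Tu m - Tu n) (Tu m - Tu n) < ε := by
    intro ε hε
    obtain ⟨N, hN⟩ := hcauchy ε hε
    refine ⟨N, fun m hm n hn => ?_⟩
    rcases le_total n m with h | h
    · have h1 := hkey m n h
      have hd := hN m hm n hn
      rw [Real.dist_eq] at hd
      have h2 : a m - a n ≤ |a m - a n| := le_abs_self _
      linarith
    · have hneg : Tu m - Tu n = (-1 : ℝ) • (Tu n - Tu m) := by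
        rw [neg_one_smul, neg_sub]
      rw [hneg, rf.E_smul_smul _ (rf.sub_mem' (hTuF n) (hTuF m))]
      have h1 := hkey n m h
      have hd := hN n hn m hm
      rw [Real.dist_eq] at hd
      have h2 : a n - a m ≤ |a n - a m| := le_abs_self _
      have : rf.E (Tu n - Tu m) (Tu n - Tu m) < ε := by linarith
      nlinarith [this]
  obtain ⟨v, hvF, hv⟩ := rf.complete Tu hTuF hCau
  have hTufix : ∀ z : X, ∃ n₀ : ℕ, ∀ n ≥ n₀, Tu n z = u z := by
    intro z
    obtain ⟨k, hk⟩ := exists_nat_ge |u z|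
    refine ⟨k, fun n hn => ?_⟩
    have hkn : |u z| ≤ (n : ℝ) := hk.trans (Nat.cast_le.mpr hn)
    simp only [hTudef]
    rw [min_eq_left (le_trans (le_abs_self _) hkn),
      max_eq_left (by linarith [neg_abs_le (u z)])]
  have hconst : ∀ x y : X, v x - u x = v y - u y := by
    intro x y
    by_cases hxy : x = y
    · rw [hxy]
    · have hspos := rf.inf_pos x y hxy
      set s := sInf {e : ℝ | ∃ p ∈ rf.F, p x = 1 ∧ p y = 0 ∧ rf.E p p = e} with hs
      by_contra hne
      set A := (v x - u x) - (v y - u y) with hA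
      have hAne : A ≠ 0 := sub_ne_zero_of_ne hne
      have hA2 : 0 < A ^ 2 := lt_of_le_of_ne (sq_nonneg A) (Ne.symm (pow_ne_zero 2 hAne))
      obtain ⟨N1, hN1⟩ := hv (s * A ^ 2) (mul_pos hspos hA2)
      obtain ⟨n₀, hn₀⟩ := hTufix x
      obtain ⟨n₁, hn₁⟩ := hTufix y
      set n := max N1 (max n₀ n₁) with hn
      have h1 := hN1 n (le_max_left _ _)
      have h2 := hn₀ n (le_trans (le_max_left _ _) (le_max_right _ _))
      have h3 := hn₁ n (le_trans (le_max_right _ _) (le_max_right _ _))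
      have hest := rf.sub_sq_le (rf.sub_mem' hvF (hTuF n)) x y hxy
      have hwx : (v - Tu n) x - (v - Tu n) y = A := by
        simp only [Pi.sub_apply, h2, h3, hA]
      rw [hwx] at hest
      nlinarith [hest, h1, hspos]
  have hEeq : ∀ n, rf.E (u - Tu n) (u - Tu n) = rf.E (v - Tu n) (v - Tu n) := by
    intro n
    rcases isEmpty_or_nonempty X with hX | hX
    · have : u - Tu n = v - Tu n := by funext z; exact (hX.elim z)
      rw [this]
    · obtain ⟨x₀⟩ := hX
      set c := v x₀ - u x₀ with hc
      have heq : u - Tu n = (v - Tu n) + fun _ => -c := by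
        funext z
        simp only [Pi.sub_apply, Pi.add_apply]
        have h := hconst z x₀
        linarith [hc]
      rw [heq, rf.E_shift (rf.sub_mem' hvF (hTuF n)) (-c)]
  rw [Metric.tendsto_atTop]
  intro ε hε
  obtain ⟨N, hN⟩ := hv ε hε
  refine ⟨N, fun n hn => ?_⟩
  have h1 := hN n hn
  have h2 : 0 ≤ rf.E (u - Tu n) (u - Tu n) := rf.nonneg _ (rf.sub_mem' hu (hTuF n))
  rw [Real.dist_eq, sub_zero, abs_of_nonneg h2, hEeq n]
  exact h1
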